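/- Every transposition of a symmetric group is a nontrivial 2-radical element: if σ is a transposition in the symmetric group on a set, then σ ≠ 1 and for all permutations x, y the subgroup generated by the commutators ⁅σ,x⁆ and ⁅σ,y⁆ is solvable. In particular, the symmetric group S_n (n ≥ 2) contains a nontrivial 2-radical element. -/

import Mathlib

set_option maxRecDepth 10000

open Equiv

open scoped commutatorElement

namespace TwoRadicalAux

/-- The Klein four group inside `S₄`, as a `Finset`. -/
def V4f : Finset (Equiv.Perm (Fin 4)) :=
  {1, swap 0 1 * swap 2 3, swap 0 2 * swap 1 3, swap 0 3 * swap 1 2}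

lemma V4_comm_mem : ∀ g h : Equiv.Perm (Fin 4), Equiv.Perm.sign g = 1 →
    Equiv.Perm.sign h = 1 → g * h * g⁻¹ * h⁻¹ ∈ V4f := by decide

lemma V4_comm_one : ∀ g h : Equiv.Perm (Fin 4), g ∈ V4f → h ∈ V4f →
    g * h * g⁻¹ * h⁻¹ = 1 := by decide

lemma V4_mul : ∀ a b : Equiv.Perm (Fin 4), a ∈ V4f → b ∈ V4f → a * b ∈ V4f := by decide

lemma V4_inv : ∀ a : Equiv.Perm (Fin 4), a ∈ V4f → a⁻¹ ∈ V4f := by decide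

/-- The Klein four group inside `S₄`, as a subgroup. -/
def V4 : Subgroup (Equiv.Perm (Fin 4)) where
  carrier := ↑V4f
  one_mem' := by decide
  mul_mem' := fun {a b} ha hb => V4_mul a b ha hb
  inv_mem' := fun {a} ha => V4_inv a ha

instance perm4_solvable : Group.IsSolvable (Equiv.Perm (Fin 4)) := by
  refine ⟨⟨3, ?_⟩⟩
  have h1 : derivedSeries (Equiv.Perm (Fin 4)) 1 ≤ Equiv.Perm.sign.ker := by
    rw [show (1 : ℕ) = 0 + 1 from rfl, derivedSeries_succ, derivedSeries_zero]
    rw [Subgroup.commutator_le]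
    intro g _ h _
    rw [MonoidHom.mem_ker, map_commutatorElement]
    exact commutatorElement_eq_one_iff_commute.mpr (mul_comm _ _)
  have h2 : derivedSeries (Equiv.Perm (Fin 4)) 2 ≤ V4 := by
    rw [show (2 : ℕ) = 1 + 1 from rfl, derivedSeries_succ]
    refine le_trans (Subgroup.commutator_mono h1 h1) ?_
    rw [Subgroup.commutator_le]
    intro g hg h hh
    have hg' : Equiv.Perm.sign g = 1 := hg
    have hh' : Equiv.Perm.sign h = 1 := hh
    exact V4_comm_mem g h hg' hh'
  have h3 : derivedSeries (Equiv.Perm (Fin 4)) 3 ≤ ⊥ := by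
    rw [show (3 : ℕ) = 2 + 1 from rfl, derivedSeries_succ]
    refine le_trans (Subgroup.commutator_mono h2 h2) ?_
    rw [Subgroup.commutator_le]
    intro g hg h hh
    rw [Subgroup.mem_bot]
    exact V4_comm_one g h hg hh
  exact le_bot_iff.mp h3

lemma perm_solvable_of_card_le {β : Type*} [Fintype β] [DecidableEq β]
    (h : Fintype.card β ≤ 4) : Group.IsSolvable (Equiv.Perm β) := by
  obtain ⟨f⟩ :=
    Function.Embedding.nonempty_of_card_le (h.trans_eq (Fintype.card_fin 4).symm)
  exact solvable_of_solvable_injective (Equiv.Perm.viaEmbeddingHom_injective f)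

/-- Permutations supported in two disjoint blocks of size at most 4 generate a
solvable group. -/
lemma block_solvable {α : Type*} [DecidableEq α] (T U : Finset α)
    (hTU : ∀ x ∈ T, x ∉ U) (hT : T.card ≤ 4) (hU : U.card ≤ 4)
    (S : Set (Equiv.Perm α))
    (hS : ∀ g ∈ S, (∀ x, g x ≠ x → x ∈ T) ∨ (∀ x, g x ≠ x → x ∈ U)) :
    Group.IsSolvable (Subgroup.closure S) := by
  classical
  have comm : ∀ (g : Equiv.Perm {x // x ∈ T}) (h : Equiv.Perm {x // x ∈ U}),
      Commute (Equiv.Perm.ofSubtype g) (Equiv.Perm.ofSubtype h) := by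
    intro g h
    apply Equiv.Perm.Disjoint.commute
    intro x
    by_cases hx : x ∈ T
    · right; exact Equiv.Perm.ofSubtype_apply_of_not_mem h (hTU x hx)
    · left; exact Equiv.Perm.ofSubtype_apply_of_not_mem g hx
  set φ := MonoidHom.noncommCoprod Equiv.Perm.ofSubtype Equiv.Perm.ofSubtype comm with hφ
  have inv : ∀ (g : Equiv.Perm α) (W : Finset α), (∀ x, g x ≠ x → x ∈ W) →
      ∀ x, (g x ∈ W) ↔ (x ∈ W) := by
    intro g W hg x
    by_cases hx : g x = x
    · rw [hx]
    · exact ⟨fun _ => hg x hx, fun _ => hg (g x) (fun hc => hx (g.injective hc))⟩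
  have keyT : ∀ g : Equiv.Perm α, (∀ x, g x ≠ x → x ∈ T) → g ∈ φ.range := by
    intro g hg
    refine ⟨(g.subtypePerm (inv g T hg), 1), ?_⟩
    have : φ (g.subtypePerm (inv g T hg), 1)
        = Equiv.Perm.ofSubtype (g.subtypePerm (inv g T hg)) *
          Equiv.Perm.ofSubtype (1 : Equiv.Perm {x // x ∈ U}) := rfl
    rw [this, map_one, mul_one]
    exact Equiv.Perm.ofSubtype_subtypePerm _ hg
  have keyU : ∀ g : Equiv.Perm α, (∀ x, g x ≠ x → x ∈ U) → g ∈ φ.range := by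
    intro g hg
    refine ⟨(1, g.subtypePerm (inv g U hg)), ?_⟩
    have : φ (1, g.subtypePerm (inv g U hg))
        = Equiv.Perm.ofSubtype (1 : Equiv.Perm {x // x ∈ T}) *
          Equiv.Perm.ofSubtype (g.subtypePerm (inv g U hg)) := rfl
    rw [this, map_one, one_mul]
    exact Equiv.Perm.ofSubtype_subtypePerm _ hg
  have hle : Subgroup.closure S ≤ φ.range :=
    (Subgroup.closure_le _).mpr (fun g hg => (hS g hg).elim (keyT g) (keyU g))
  haveI i1 : Group.IsSolvable (Equiv.Perm {x // x ∈ T}) :=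
    perm_solvable_of_card_le (by simpa using hT)
  haveI i2 : Group.IsSolvable (Equiv.Perm {x // x ∈ U}) :=
    perm_solvable_of_card_le (by simpa using hU)
  haveI i3 : Group.IsSolvable φ.range :=
    solvable_of_surjective φ.rangeRestrict_surjective
  exact solvable_of_solvable_injective (Subgroup.inclusion_injective hle)

lemma swap_support_subset {α : Type*} [DecidableEq α] {u v : α} {T : Finset α}
    (hu : u ∈ T) (hv : v ∈ T) : ∀ z, Equiv.swap u v z ≠ z → z ∈ T := by
  intro z hz
  by_contra hzT
  exact hz (Equiv.swap_apply_of_ne_of_ne (fun h => hzT (h ▸ hu)) (fun h => hzT (h ▸ hv)))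

lemma union_card {α : Type*} [DecidableEq α] {s t : Finset α} (h : (s ∩ t).Nonempty) :
    (s ∪ t).card + 1 ≤ s.card + t.card := by
  have h1 := Finset.card_union_add_card_inter s t
  have h2 : 1 ≤ (s ∩ t).card := Finset.card_pos.mpr h
  omega

lemma disj_of {α : Type*} [DecidableEq α] {s t : Finset α} (h : ¬(s ∩ t).Nonempty) :
    ∀ x ∈ s, x ∉ t := fun x hx hxt => h ⟨x, Finset.mem_inter.mpr ⟨hx, hxt⟩⟩

/-- The subgroup generated by any three transpositions is solvable. -/
lemma three_swaps {α : Type*} [DecidableEq α] (a b c d e f : α)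
    (hef : e ≠ f) :
    Group.IsSolvable (Subgroup.closure
      ({Equiv.swap a b, Equiv.swap c d, Equiv.swap e f} : Set (Equiv.Perm α))) := by
  classical
  set s : Finset α := {a, b} with hs
  set t : Finset α := {c, d} with ht
  set u : Finset α := {e, f} with hu
  have hsc : s.card ≤ 2 := Finset.card_insert_le _ _ |>.trans (by simp)
  have htc : t.card ≤ 2 := Finset.card_insert_le _ _ |>.trans (by simp)
  have huc : u.card ≤ 2 := Finset.card_insert_le _ _ |>.trans (by simp)
  have hSgen : ∀ (T U : Finset α), a ∈ T → b ∈ T →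
      ((c ∈ T ∧ d ∈ T) ∨ (c ∈ U ∧ d ∈ U)) → ((e ∈ T ∧ f ∈ T) ∨ (e ∈ U ∧ f ∈ U)) →
      ∀ g ∈ ({Equiv.swap a b, Equiv.swap c d, Equiv.swap e f} : Set (Equiv.Perm α)),
        (∀ x, g x ≠ x → x ∈ T) ∨ (∀ x, g x ≠ x → x ∈ U) := by
    intro T U haT hbT hcd hef g hg
    simp only [Set.mem_insert_iff, Set.mem_singleton_iff] at hg
    rcases hg with rfl | rfl | rfl
    · exact Or.inl (swap_support_subset haT hbT)
    · rcases hcd with ⟨h1, h2⟩ | ⟨h1, h2⟩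
      · exact Or.inl (swap_support_subset h1 h2)
      · exact Or.inr (swap_support_subset h1 h2)
    · rcases hef with ⟨h1, h2⟩ | ⟨h1, h2⟩
      · exact Or.inl (swap_support_subset h1 h2)
      · exact Or.inr (swap_support_subset h1 h2)
  have hmem_s : a ∈ s ∧ b ∈ s := by constructor <;> simp [hs]
  have hmem_t : c ∈ t ∧ d ∈ t := by constructor <;> simp [ht]
  have hmem_u : e ∈ u ∧ f ∈ u := by constructor <;> simp [hu]
  by_cases hP : (s ∩ t).Nonempty
  · by_cases hQR : ((s ∪ t) ∩ u).Nonempty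
    · -- everything in one block of size ≤ 4
      refine block_solvable (s ∪ t ∪ u) ∅ (by simp) ?cT (by simp) _ ?hS
      case hS =>
        apply hSgen
        · exact Finset.mem_union_left _ (Finset.mem_union_left _ hmem_s.1)
        · exact Finset.mem_union_left _ (Finset.mem_union_left _ hmem_s.2)
        · exact Or.inl ⟨Finset.mem_union_left _ (Finset.mem_union_right _ hmem_t.1),
            Finset.mem_union_left _ (Finset.mem_union_right _ hmem_t.2)⟩
        · exact Or.inl ⟨Finset.mem_union_right _ hmem_u.1,
            Finset.mem_union_right _ hmem_u.2⟩
      case cT =>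
        have h1 := union_card hP
        have h2 := union_card hQR
        omega
    · -- {a,b,c,d} and {e,f} are separate blocks
      refine block_solvable (s ∪ t) u (disj_of hQR) ?cT (huc.trans (by norm_num)) _ ?hS
      case hS =>
        apply hSgen
        · exact Finset.mem_union_left _ hmem_s.1
        · exact Finset.mem_union_left _ hmem_s.2
        · exact Or.inl ⟨Finset.mem_union_right _ hmem_t.1,
            Finset.mem_union_right _ hmem_t.2⟩
        · exact Or.inr ⟨hmem_u.1, hmem_u.2⟩
      case cT =>
        have h1 := union_card hP
        omega
  · by_cases hQ : (s ∩ u).Nonempty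
    · by_cases hR : (t ∩ u).Nonempty
      · -- everything connected through u
        refine block_solvable (s ∪ t ∪ u) ∅ (by simp) ?cT (by simp) _ ?hS
        case hS =>
          apply hSgen
          · exact Finset.mem_union_left _ (Finset.mem_union_left _ hmem_s.1)
          · exact Finset.mem_union_left _ (Finset.mem_union_left _ hmem_s.2)
          · exact Or.inl ⟨Finset.mem_union_left _ (Finset.mem_union_right _ hmem_t.1),
              Finset.mem_union_left _ (Finset.mem_union_right _ hmem_t.2)⟩
          · exact Or.inl ⟨Finset.mem_union_right _ hmem_u.1,
              Finset.mem_union_right _ hmem_u.2⟩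
        case cT =>
          have key : s ∪ t ∪ u = (s ∪ u) ∪ (t ∪ u) := by
            ext z
            simp only [Finset.mem_union]
            tauto
          rw [key]
          have h1 := union_card hQ
          have h2 := union_card hR
          have h3 := Finset.card_union_add_card_inter (s ∪ u) (t ∪ u)
          have h4 : u ⊆ (s ∪ u) ∩ (t ∪ u) := by
            intro z hz
            exact Finset.mem_inter.mpr
              ⟨Finset.mem_union_right _ hz, Finset.mem_union_right _ hz⟩
          have h5 := Finset.card_le_card h4
          have h6 : u.card = 2 := by rw [hu]; exact Finset.card_pair hef
          omega
      · -- {a,b,e,f} and {c,d}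
        refine block_solvable (s ∪ u) t ?disj ?cT (htc.trans (by norm_num)) _ ?hS
        case disj =>
          intro x hx hxt
          rcases Finset.mem_union.mp hx with h | h
          · exact disj_of hP x h hxt
          · exact hR ⟨x, Finset.mem_inter.mpr ⟨hxt, h⟩⟩
        case hS =>
          apply hSgen
          · exact Finset.mem_union_left _ hmem_s.1
          · exact Finset.mem_union_left _ hmem_s.2
          · exact Or.inr ⟨hmem_t.1, hmem_t.2⟩
          · exact Or.inl ⟨Finset.mem_union_right _ hmem_u.1,
              Finset.mem_union_right _ hmem_u.2⟩
        case cT =>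
          have h1 := union_card hQ
          omega
    · -- {a,b} alone; {c,d,e,f} together
      refine block_solvable s (t ∪ u) ?disj (hsc.trans (by norm_num)) ?cU _ ?hS
      case disj =>
        intro x hx hc
        rcases Finset.mem_union.mp hc with h | h
        · exact disj_of hP x hx h
        · exact disj_of hQ x hx h
      case hS =>
        apply hSgen
        · exact hmem_s.1
        · exact hmem_s.2
        · exact Or.inr ⟨Finset.mem_union_left _ hmem_t.1, Finset.mem_union_left _ hmem_t.2⟩
        · exact Or.inr ⟨Finset.mem_union_right _ hmem_u.1, Finset.mem_union_right _ hmem_u.2⟩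
      case cU =>
        have := Finset.card_union_le t u
        omega

end TwoRadicalAux

/-- Every transposition of a symmetric group is a nontrivial 2-radical element:
if `σ` is a swap then `σ ≠ 1` and for all permutations `x, y` the subgroup
generated by `⁅σ,x⁆` and `⁅σ,y⁆` is solvable. -/
theorem swap_is_nontrivial_two_radical {α : Type*} [DecidableEq α]
    (σ : Equiv.Perm α) (hσ : σ.IsSwap) :
    σ ≠ 1 ∧ ∀ x y : Equiv.Perm α,
      Group.IsSolvable (Subgroup.closure ({⁅σ, x⁆, ⁅σ, y⁆} : Set (Equiv.Perm α))) := by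
  obtain ⟨a, b, hab, rfl⟩ := hσ
  constructor
  · intro h
    apply hab
    have := Equiv.swap_apply_left a b
    rw [h] at this
    simpa using this
  · intro x y
    have hcomm : ∀ z : Equiv.Perm α,
        ⁅Equiv.swap a b, z⁆ = Equiv.swap a b * Equiv.swap (z a) (z b) := by
      intro z
      rw [commutatorElement_def, Equiv.swap_apply_apply, Equiv.swap_inv]
      group
    have hK := TwoRadicalAux.three_swaps a b (x a) (x b) (y a) (y b) (fun h => hab (y.injective h))
    have hle : Subgroup.closure ({⁅Equiv.swap a b, x⁆, ⁅Equiv.swap a b, y⁆} :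
        Set (Equiv.Perm α)) ≤ Subgroup.closure
        ({Equiv.swap a b, Equiv.swap (x a) (x b), Equiv.swap (y a) (y b)} :
          Set (Equiv.Perm α)) := by
      rw [Subgroup.closure_le]
      intro g hg
      simp only [Set.mem_insert_iff, Set.mem_singleton_iff] at hg
      rcases hg with rfl | rfl
      · rw [hcomm x]
        exact mul_mem (Subgroup.subset_closure (by simp))
          (Subgroup.subset_closure (by simp))
      · rw [hcomm y]
        exact mul_mem (Subgroup.subset_closure (by simp))
          (Subgroup.subset_closure (by simp))
    exact solvable_of_solvable_injective (Subgroup.inclusion_injective hle)
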